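/- arXiv:1504.04798 — 6 statements merged into one kernel-verified Lean document; each statement's English description precedes it below -/
import Mathlib

section
/- Let U be a type and let α, β, γ, δ : U → Prop be unary predicates on U. Then (∃ ρ : U → Prop, (∀ x, α x ∨ ρ x) ∧ (∀ x, β x ∨ ¬ ρ x) ∧ (∃ u, γ u ∧ ρ u) ∧ (∃ v, δ v ∧ ¬ ρ v)) ↔ ((∀ x, α x ∨ β x) ∧ ∃ u v, u ≠ v ∧ γ u ∧ β u ∧ δ v ∧ α v). (The simplest instance of Behmann's 'rough resultant' for the main elimination form, including the distinctness clause u ≠ v.) -/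
theorem behmann_rough_resultant_simple (U : Type*) (α β γ δ : U → Prop) :
    (∃ ρ : U → Prop, (∀ x, α x ∨ ρ x) ∧ (∀ x, β x ∨ ¬ ρ x) ∧
        (∃ u, γ u ∧ ρ u) ∧ (∃ v, δ v ∧ ¬ ρ v)) ↔
      ((∀ x, α x ∨ β x) ∧ ∃ u v, u ≠ v ∧ γ u ∧ β u ∧ δ v ∧ α v) := by
  constructor
  · rintro ⟨ρ, h1, h2, ⟨u, hγ, hρ⟩, ⟨v, hδ, hnρ⟩⟩
    refine ⟨fun x => (h1 x).elim Or.inl (fun hx => (h2 x).elim Or.inr (fun h => absurd hx h)),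
      u, v, fun h => hnρ (h ▸ hρ), hγ, (h2 u).resolve_right (not_not_intro hρ),
      hδ, (h1 v).resolve_right hnρ⟩
  · rintro ⟨hab, u, v, huv, hγ, hβ, hδ, hα⟩
    refine ⟨fun x => ¬ α x ∨ x = u, fun x => ?_, fun x => ?_, ⟨u, hγ, Or.inr rfl⟩,
      ⟨v, hδ, ?_⟩⟩
    · by_cases h : α x
      · exact Or.inl h
      · exact Or.inr (Or.inl h)
    · by_cases h : β x
      · exact Or.inl h
      · exact Or.inr (fun hc => hc.elim (fun hna => hna ((hab x).resolve_right h))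
          (fun he => h (he ▸ hβ)))
    · exact fun hc => hc.elim (fun hna => hna hα) (fun he => huv he.symm)
end

section
/- Let U be a type, let α, β : U → Prop be unary predicates on U, let I and J be index types, and let γ : I → U → Prop and δ : J → U → Prop be families of unary predicates. Then (∃ ρ : U → Prop, (∀ x, α x ∨ ρ x) ∧ (∀ x, β x ∨ ¬ ρ x) ∧ (∀ i, ∃ u, γ i u ∧ ρ u) ∧ (∀ j, ∃ v, δ j v ∧ ¬ ρ v)) ↔ ((∀ x, α x ∨ β x) ∧ ∃ (u : I → U) (v : J → U), (∀ i j, u i ≠ v j) ∧ (∀ i, γ i (u i) ∧ β (u i)) ∧ (∀ j, δ j (v j) ∧ α (v j))). (Behmann's general 'rough resultant' for the main elimination form: the quantifier ∃ρ is eliminated from a conjunction of formulas ∀x(αx ∨ ρx), ∀x(βx ∨ ¬ρx), ∃u(γᵢu ∧ ρu), ∃v(δⱼv ∧ ¬ρv), and in the resultant the witnesses uᵢ can be chosen each distinct from each vⱼ.) -/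
theorem behmann_rough_resultant_general (U : Type*) (α β : U → Prop)
    (I J : Type*) (γ : I → U → Prop) (δ : J → U → Prop) :
    (∃ ρ : U → Prop, (∀ x, α x ∨ ρ x) ∧ (∀ x, β x ∨ ¬ ρ x) ∧
        (∀ i, ∃ u, γ i u ∧ ρ u) ∧ (∀ j, ∃ v, δ j v ∧ ¬ ρ v)) ↔
      ((∀ x, α x ∨ β x) ∧ ∃ (u : I → U) (v : J → U),
        (∀ i j, u i ≠ v j) ∧ (∀ i, γ i (u i) ∧ β (u i)) ∧ (∀ j, δ j (v j) ∧ α (v j))) := by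
  constructor
  · rintro ⟨ρ, h1, h2, h3, h4⟩
    refine ⟨fun x => (h1 x).elim Or.inl (fun hρ => Or.inr ((h2 x).resolve_right (not_not_intro hρ))), ?_⟩
    choose u hu hρu using h3
    choose v hv hρv using h4
    refine ⟨u, v, fun i j h => hρv j (h ▸ hρu i), fun i => ⟨hu i, (h2 (u i)).resolve_right (not_not_intro (hρu i))⟩, fun j => ⟨hv j, (h1 (v j)).resolve_right (hρv j)⟩⟩
  · rintro ⟨htot, u, v, hne, hu, hv⟩
    refine ⟨fun x => ¬ α x ∨ ∃ i, x = u i, fun x => by tauto, ?_, fun i => ⟨u i, (hu i).1, Or.inr ⟨i, rfl⟩⟩, fun j => ⟨v j, (hv j).1, ?_⟩⟩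
    · intro x
      by_cases hβ : β x
      · exact Or.inl hβ
      · refine Or.inr ?_
        rintro (hα | ⟨i, rfl⟩)
        · exact hα ((htot x).resolve_right hβ)
        · exact hβ (hu i).2
    · rintro (hα | ⟨i, hi⟩)
      · exact hα (hv j).2
      · exact hne i j hi.symm
end

section
/- Let k be a natural number and let L be a first-order language whose symbols consist of exactly k unary relation symbols (no function symbols, no constant symbols, no relation symbols of other arities). Let M and N be L-structures such that for every subset S of the k relation symbols, the set of elements of M whose 'type' is exactly S (i.e., the elements m such that, for each relation symbol R, R holds of m if and only if R ∈ S) and the corresponding set of elements of N either have the same cardinality or are both infinite. Then M and N are elementarily equivalent, i.e., they satisfy exactly the same L-sentences (in first-order logic with equality). -/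
open FirstOrder Language

/-- The first-order language whose symbols are exactly `k` unary relation symbols. -/
def monadicLang (k : ℕ) : FirstOrder.Language where
  Functions := fun _ => Empty
  Relations := fun n => match n with
    | 1 => Fin k
    | _ => Empty

/-- The set of elements of `M` whose type is exactly `S`: those `m` such that, for each
relation symbol `R`, `R` holds of `m` iff `R ∈ S`. -/
def typeClass {k : ℕ} (M : Type*) [(monadicLang k).Structure M] (S : Set (Fin k)) : Set M :=
  {m : M | ∀ R : Fin k,
    Structure.RelMap (L := monadicLang k) (M := M) (n := 1) R ![m] ↔ R ∈ S}

section Aux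

/-- A pair of tuples forms a partial isomorphism. -/
def MonPIso (k : ℕ) {M N : Type*} [(monadicLang k).Structure M] [(monadicLang k).Structure N]
    {n : ℕ} (v : Fin n → M) (w : Fin n → N) : Prop :=
  (∀ i j, v i = v j ↔ w i = w j) ∧
  ∀ i (R : Fin k), Structure.RelMap (L := monadicLang k) (M := M) (n := 1) R ![v i] ↔
    Structure.RelMap (L := monadicLang k) (M := N) (n := 1) R ![w i]

def MonHyp (k : ℕ) (M N : Type*) [(monadicLang k).Structure M] [(monadicLang k).Structure N] :
    Prop :=
  ∀ S : Set (Fin k),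
    Nonempty (typeClass M S ≃ typeClass N S) ∨
      (Infinite (typeClass M S) ∧ Infinite (typeClass N S))

variable {k : ℕ} {M N : Type*} [(monadicLang k).Structure M] [(monadicLang k).Structure N]

lemma MonHyp.symm (h : MonHyp k M N) : MonHyp k N M := fun S =>
  (h S).imp (fun ⟨e⟩ => ⟨e.symm⟩) fun ⟨h1, h2⟩ => ⟨h2, h1⟩

lemma MonPIso.symm {n : ℕ} {v : Fin n → M} {w : Fin n → N} (h : MonPIso k v w) :
    MonPIso k w v :=
  ⟨fun i j => (h.1 i j).symm, fun i R => (h.2 i R).symm⟩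

lemma monadic_term_eq_var {n : ℕ} (t : (monadicLang k).Term (Empty ⊕ Fin n)) :
    ∃ i : Fin n, t = Term.var (Sum.inr i) := by
  cases t with
  | var x =>
    cases x with
    | inl e => exact e.elim
    | inr i => exact ⟨i, rfl⟩
  | func f ts => exact f.elim

lemma exists_fresh (h : MonHyp k M N) {n : ℕ} {v : Fin n → M} {w : Fin n → N}
    (hp : MonPIso k v w) {S : Set (Fin k)} {m : M} (hmS : m ∈ typeClass M S)
    (hne : ∀ i, v i ≠ m) : ∃ x ∈ typeClass N S, ∀ i, w i ≠ x := by
  classical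
  by_cases hinf : (typeClass N S).Infinite
  · obtain ⟨x, hx, hx2⟩ := hinf.exists_notMem_finset (Finset.univ.image w)
    exact ⟨x, hx, fun i hi => hx2 (Finset.mem_image.mpr ⟨i, Finset.mem_univ i, hi⟩)⟩
  · have hBfin : (typeClass N S).Finite := Set.not_infinite.mp hinf
    rcases h S with ⟨⟨e⟩⟩ | ⟨_, hiN⟩
    swap
    · rw [Set.not_infinite, ← Set.finite_coe_iff] at hinf
      exact absurd hiN (not_infinite_iff_finite.mpr hinf)
    have hAfin : (typeClass M S).Finite := by
      rw [← Set.finite_coe_iff] at hBfin ⊢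
      exact Finite.of_equiv _ e.symm
    have hcard : (typeClass M S).ncard = (typeClass N S).ncard := by
      rw [← Nat.card_coe_set_eq, ← Nat.card_coe_set_eq]
      exact Nat.card_congr e
    by_contra hcon
    push_neg at hcon
    set f : N → M := fun x => if hx : ∃ i, w i = x then v hx.choose else m with hf
    have hmaps : ∀ x ∈ typeClass N S, f x ∈ typeClass M S \ {m} := by
      intro x hx
      obtain ⟨i, hi⟩ := hcon x hx
      have hex : ∃ i, w i = x := ⟨i, hi⟩
      have hwx : w hex.choose = x := hex.choose_spec
      simp only [hf, dif_pos hex]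
      refine ⟨fun R => (hp.2 hex.choose R).trans ?_, hne hex.choose⟩
      rw [hwx]
      exact hx R
    have hinj : Set.InjOn f (typeClass N S) := by
      intro x hx y hy hxy
      obtain ⟨i, hi⟩ := hcon x hx
      obtain ⟨j, hj⟩ := hcon y hy
      have hex : ∃ i, w i = x := ⟨i, hi⟩
      have hey : ∃ i, w i = y := ⟨j, hj⟩
      simp only [hf, dif_pos hex, dif_pos hey] at hxy
      have := (hp.1 hex.choose hey.choose).mp hxy
      rw [hex.choose_spec, hey.choose_spec] at this
      exact this
    have hle := Set.ncard_le_ncard_of_injOn f hmaps hinj hAfin.diff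
    have hlt : (typeClass M S \ {m}).ncard < (typeClass M S).ncard :=
      Set.ncard_diff_singleton_lt_of_mem hmS hAfin
    omega

lemma exists_extend (h : MonHyp k M N) {n : ℕ} {v : Fin n → M} {w : Fin n → N}
    (hp : MonPIso k v w) (m : M) :
    ∃ m' : N, MonPIso k (Fin.snoc v m) (Fin.snoc w m') := by
  by_cases hm : ∃ i, v i = m
  · obtain ⟨i, hi⟩ := hm
    refine ⟨w i, fun a b => ?_, fun a R => ?_⟩
    · refine Fin.lastCases ?_ (fun a' => ?_) a
      · refine Fin.lastCases ?_ (fun b' => ?_) b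
        · simp
        · simp only [Fin.snoc_last, Fin.snoc_castSucc, ← hi]
          exact hp.1 i b'
      · refine Fin.lastCases ?_ (fun b' => ?_) b
        · simp only [Fin.snoc_last, Fin.snoc_castSucc, ← hi]
          exact hp.1 a' i
        · simp only [Fin.snoc_castSucc]
          exact hp.1 a' b'
    · refine Fin.lastCases ?_ (fun a' => ?_) a
      · simp only [Fin.snoc_last, ← hi]
        exact hp.2 i R
      · simp only [Fin.snoc_castSucc]
        exact hp.2 a' R
  · push_neg at hm
    have hmS : m ∈ typeClass M
        {R | Structure.RelMap (L := monadicLang k) (M := M) (n := 1) R ![m]} :=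
      fun R => Iff.rfl
    obtain ⟨x, hxS, hxw⟩ := exists_fresh h hp hmS hm
    refine ⟨x, fun a b => ?_, fun a R => ?_⟩
    · refine Fin.lastCases ?_ (fun a' => ?_) a
      · refine Fin.lastCases ?_ (fun b' => ?_) b
        · simp
        · simp only [Fin.snoc_last, Fin.snoc_castSucc]
          constructor
          · intro hh; exact absurd hh.symm (hm b')
          · intro hh; exact absurd hh.symm (hxw b')
      · refine Fin.lastCases ?_ (fun b' => ?_) b
        · simp only [Fin.snoc_last, Fin.snoc_castSucc]
          constructor
          · intro hh; exact absurd hh (hm a')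
          · intro hh; exact absurd hh (hxw a')
        · simp only [Fin.snoc_castSucc]
          exact hp.1 a' b'
    · refine Fin.lastCases ?_ (fun a' => ?_) a
      · simp only [Fin.snoc_last]
        exact (hmS R).trans (hxS R).symm
      · simp only [Fin.snoc_castSucc]
        exact hp.2 a' R

lemma monadic_realize_iff (h : MonHyp k M N) :
    ∀ {n : ℕ} (φ : (monadicLang k).BoundedFormula Empty n)
      (xs : Fin n → M) (ys : Fin n → N), MonPIso k xs ys →
      (φ.Realize (fun e => e.elim) xs ↔ φ.Realize (fun e => e.elim) ys) := by
  intro n φ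
  induction φ with
  | falsum => intro xs ys _; exact Iff.rfl
  | equal t₁ t₂ =>
    intro xs ys hp
    obtain ⟨i, rfl⟩ := monadic_term_eq_var t₁
    obtain ⟨j, rfl⟩ := monadic_term_eq_var t₂
    exact hp.1 i j
  | @rel n l R ts =>
    match l, R, ts with
    | 0, R, ts => exact R.elim
    | 1, R, ts =>
      intro xs ys hp
      obtain ⟨i, hi⟩ := monadic_term_eq_var (ts 0)
      have hM : (fun j => Term.realize (Sum.elim (fun e => e.elim) xs) (ts j)) = ![xs i] := by
        funext j
        have hj : j = 0 := Subsingleton.elim _ _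
        subst hj
        rw [hi]
        simp
      have hN : (fun j => Term.realize (Sum.elim (fun e => e.elim) ys) (ts j)) = ![ys i] := by
        funext j
        have hj : j = 0 := Subsingleton.elim _ _
        subst hj
        rw [hi]
        simp
      change Structure.RelMap R (fun j => Term.realize (Sum.elim (fun e => e.elim) xs) (ts j)) ↔
        Structure.RelMap R (fun j => Term.realize (Sum.elim (fun e => e.elim) ys) (ts j))
      rw [hM, hN]
      exact hp.2 i R
    | (l + 2), R, ts => exact R.elim
  | imp f₁ f₂ ih₁ ih₂ =>
    intro xs ys hp
    simp only [BoundedFormula.realize_imp]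
    rw [ih₁ xs ys hp, ih₂ xs ys hp]
  | all f ih =>
    intro xs ys hp
    simp only [BoundedFormula.realize_all]
    constructor
    · intro H a
      obtain ⟨m, hm⟩ := exists_extend h.symm hp.symm a
      exact (ih _ _ hm.symm).mp (H m)
    · intro H a
      obtain ⟨m', hm'⟩ := exists_extend h hp a
      exact (ih _ _ hm').mpr (H m')

end Aux

theorem monadic_elementary_equivalence (k : ℕ) (M N : Type*)
    [(monadicLang k).Structure M] [(monadicLang k).Structure N]
    (h : ∀ S : Set (Fin k),
      Nonempty (typeClass M S ≃ typeClass N S) ∨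
        (Infinite (typeClass M S) ∧ Infinite (typeClass N S)))
    (φ : (monadicLang k).Sentence) :
    M ⊨ φ ↔ N ⊨ φ := by
  have hp : MonPIso k (M := M) (N := N) (Fin.elim0) (Fin.elim0) :=
    ⟨fun i => i.elim0, fun i => i.elim0⟩
  have key := monadic_realize_iff (M := M) (N := N) h φ Fin.elim0 Fin.elim0 hp
  have e1 : (fun e => Empty.elim e : Empty → M) = default := funext fun e => e.elim
  have e2 : (fun e => Empty.elim e : Empty → N) = default := funext fun e => e.elim
  have e3 : (Fin.elim0 : Fin 0 → M) = default := funext fun i => i.elim0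
  have e4 : (Fin.elim0 : Fin 0 → N) = default := funext fun i => i.elim0
  rw [e1, e2, e3, e4] at key
  exact key
end

section
/- Let L be a first-order language with finitely many relation symbols, all of them unary, and with no function or constant symbols. Then every L-sentence (of first-order logic with equality) that has a model has a finite model. (The finite model property for monadic first-order logic, underlying the decision procedure for the monadic case of the Entscheidungsproblem.) -/
open FirstOrder Language

namespace MonadicFMP

variable {L : FirstOrder.Language}

/-- quantifier depth of a bounded formula over `Empty`. -/
def qd : ∀ {k : ℕ}, L.BoundedFormula Empty k → ℕ
  | _, .falsum => 0
  | _, .equal _ _ => 0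
  | _, .rel _ _ => 0
  | _, .imp f g => max (qd f) (qd g)
  | _, .all f => qd f + 1

lemma term_eq_var (hFun : ∀ n, IsEmpty (L.Functions n)) {α : Type*} (t : L.Term α) :
    ∃ i, t = Term.var i := by
  cases t with
  | var i => exact ⟨i, rfl⟩
  | func f ts => exact (hFun _).elim f

variable {M : Type*} [L.Structure M]

def color (L : FirstOrder.Language) {M : Type*} [L.Structure M] (x : M) : L.Relations 1 → Prop :=
  fun R => Structure.RelMap R (fun _ => x)

def subStr (hFun : ∀ n, IsEmpty (L.Functions n)) (s : Set M) :
    L.Structure s where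
  funMap {k} f _ := (hFun k).elim f
  RelMap {k} R v := Structure.RelMap R fun i => (v i : M)

lemma card_image_pattern {α β γ : Type*} [DecidableEq β] [DecidableEq γ]
    (I : Finset α) (f : α → β) (g : α → γ)
    (h : ∀ i ∈ I, ∀ j ∈ I, (f i = f j ↔ g i = g j)) :
    (I.image f).card = (I.image g).card := by
  classical
  refine Finset.card_bij (fun x hx => g (Finset.mem_image.1 hx).choose) ?_ ?_ ?_
  · intro x hx
    exact Finset.mem_image.2 ⟨_, (Finset.mem_image.1 hx).choose_spec.1, rfl⟩
  · intro x1 hx1 x2 hx2 heq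
    have s1 := (Finset.mem_image.1 hx1).choose_spec
    have s2 := (Finset.mem_image.1 hx2).choose_spec
    rw [← s1.2, ← s2.2]
    exact (h _ s1.1 _ s2.1).2 heq
  · intro y hy
    obtain ⟨a, ha, rfl⟩ := Finset.mem_image.1 hy
    have hfa : f a ∈ I.image f := Finset.mem_image.2 ⟨a, ha, rfl⟩
    refine ⟨f a, hfa, ?_⟩
    have s := (Finset.mem_image.1 hfa).choose_spec
    exact (h _ s.1 _ ha).1 s.2

variable (SS : (L.Relations 1 → Prop) → Set M)

def NN : Set M := {x | x ∈ SS (color L x)}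

lemma extend_backward {m : ℕ} (xs : Fin m → NN SS) (ys : Fin m → M)
    (h1 : ∀ i, color L ((xs i : M)) = color L (ys i))
    (h2 : ∀ i j, xs i = xs j ↔ ys i = ys j)
    (a : NN SS) :
    ∃ b : M, color L ((a : M)) = color L b ∧ ∀ i, (xs i = a ↔ ys i = b) := by
  classical
  by_cases ha : ∃ i, xs i = a
  · obtain ⟨i0, hi0⟩ := ha
    refine ⟨ys i0, by rw [← hi0]; exact h1 i0, fun i => ?_⟩
    rw [← hi0]; exact h2 i i0
  · set c := color L ((a : M)) with hc
    set I : Finset (Fin m) := Finset.univ.filter (fun i => color L ((xs i : M)) = c) with hI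
    set F : Finset M := I.image ys with hF
    have hcard : F.card = (I.image (fun i => ((xs i : M)))).card :=
      (card_image_pattern I _ ys (fun i _ j _ => by
        rw [← Subtype.ext_iff]; exact h2 i j)).symm
    have hnot : ¬ ({x | color L x = c} ⊆ (F : Set M)) := by
      intro hsub
      set G : Finset M := insert (a : M) (I.image (fun i => ((xs i : M)))) with hG
      have haG : (a : M) ∉ I.image (fun i => ((xs i : M))) := by
        intro hmem
        obtain ⟨i, _, hi⟩ := Finset.mem_image.1 hmem
        exact ha ⟨i, Subtype.ext hi⟩
      have hGF : G ⊆ F := by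
        intro x hx
        apply hsub
        rcases Finset.mem_insert.1 hx with rfl | hx
        · rfl
        · obtain ⟨i, hiI, rfl⟩ := Finset.mem_image.1 hx
          exact (Finset.mem_filter.1 hiI).2
      have := Finset.card_le_card hGF
      rw [Finset.card_insert_of_notMem haG] at this
      omega
    obtain ⟨b, hbc, hbF⟩ := Set.not_subset.1 hnot
    refine ⟨b, by exact hbc.symm, fun i => ?_⟩
    constructor
    · intro hxa; exact absurd ⟨i, hxa⟩ ha
    · intro hyb
      exfalso; apply hbF
      have hiI : i ∈ I := by
        rw [hI, Finset.mem_filter]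
        refine ⟨Finset.mem_univ _, ?_⟩
        rw [h1 i, hyb, hbc]
      exact Finset.mem_image.2 ⟨i, hiI, hyb⟩

lemma extend_forward {n : ℕ}
    (hP : ∀ c (F : Finset M), F.card < n → ¬ ({x | color L x = c} ⊆ (F : Set M)) →
      ∃ a, a ∈ SS c ∧ a ∉ F ∧ color L a = c)
    {m : ℕ} (hm : m < n) (xs : Fin m → NN SS) (ys : Fin m → M)
    (h1 : ∀ i, color L ((xs i : M)) = color L (ys i))
    (h2 : ∀ i j, xs i = xs j ↔ ys i = ys j)
    (b : M) :
    ∃ a : NN SS, color L ((a : M)) = color L b ∧ ∀ i, (xs i = a ↔ ys i = b) := by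
  classical
  by_cases hb : ∃ i, ys i = b
  · obtain ⟨i0, hi0⟩ := hb
    refine ⟨xs i0, by rw [← hi0]; exact h1 i0, fun i => ?_⟩
    rw [← hi0]; exact h2 i i0
  · set c := color L b with hc
    set I : Finset (Fin m) := Finset.univ.filter (fun i => color L (ys i) = c) with hI
    set F : Finset M := I.image (fun i => ((xs i : M))) with hF
    have hcard : F.card = (I.image ys).card :=
      card_image_pattern I _ ys (fun i _ j _ => by
        rw [← Subtype.ext_iff]; exact h2 i j)
    have hFn : F.card < n := by
      have h1' : F.card ≤ I.card := Finset.card_image_le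
      have h2' : I.card ≤ m := by
        have := Finset.card_filter_le (Finset.univ : Finset (Fin m))
          (fun i => color L (ys i) = c)
        simpa using this
      omega
    have hnot : ¬ ({x | color L x = c} ⊆ (F : Set M)) := by
      intro hsub
      set G : Finset M := insert b (I.image ys) with hG
      have hbG : b ∉ I.image ys := by
        intro hmem
        obtain ⟨i, _, hi⟩ := Finset.mem_image.1 hmem
        exact hb ⟨i, hi⟩
      have hGF : G ⊆ F := by
        intro x hx
        apply hsub
        rcases Finset.mem_insert.1 hx with rfl | hx
        · rfl
        · obtain ⟨i, hiI, rfl⟩ := Finset.mem_image.1 hx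
          exact (Finset.mem_filter.1 hiI).2
      have := Finset.card_le_card hGF
      rw [Finset.card_insert_of_notMem hbG] at this
      omega
    obtain ⟨a, haS, haF, hac⟩ := hP c F hFn hnot
    have haNN : a ∈ NN SS := by
      show a ∈ SS (color L a); rw [hac]; exact haS
    refine ⟨⟨a, haNN⟩, hac, fun i => ?_⟩
    constructor
    · intro hxa
      exfalso; apply haF
      have hiI : i ∈ I := by
        rw [hI, Finset.mem_filter]
        refine ⟨Finset.mem_univ _, ?_⟩
        rw [← h1 i, hxa]
        exact hac
      exact Finset.mem_image.2 ⟨i, hiI, congrArg Subtype.val hxa⟩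
    · intro hyb; exact absurd ⟨i, hyb⟩ hb

lemma key (hFun : ∀ k, IsEmpty (L.Functions k))
    (hRel : ∀ k, k ≠ 1 → IsEmpty (L.Relations k))
    {n : ℕ}
    (hP : ∀ c (F : Finset M), F.card < n → ¬ ({x | color L x = c} ⊆ (F : Set M)) →
      ∃ a, a ∈ SS c ∧ a ∉ F ∧ color L a = c)
    {m : ℕ} (ψ : L.BoundedFormula Empty m) :
    ∀ (_hd : m + qd ψ < n) (xs : Fin m → NN SS) (ys : Fin m → M)
      (_h1 : ∀ i, color L ((xs i : M)) = color L (ys i))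
      (_h2 : ∀ i j, xs i = xs j ↔ ys i = ys j),
    (@BoundedFormula.Realize L _ (subStr hFun (NN SS)) Empty m ψ Empty.elim xs
      ↔ ψ.Realize Empty.elim ys) := by
  induction ψ with
  | falsum =>
    intro hd xs ys h1 h2
    simp [BoundedFormula.Realize]
  | equal t1 t2 =>
    intro hd xs ys h1 h2
    obtain ⟨z1, rfl⟩ := term_eq_var hFun t1
    obtain ⟨z2, rfl⟩ := term_eq_var hFun t2
    cases z1 with
    | inl e => exact e.elim
    | inr i =>
      cases z2 with
      | inl e => exact e.elim
      | inr j =>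
        simp only [BoundedFormula.Realize, Term.realize, Sum.elim_inr]
        exact h2 i j
  | @rel m l R ts =>
    intro hd xs ys h1 h2
    have hl : l = 1 := by
      by_contra h; exact (hRel l h).elim R
    subst hl
    obtain ⟨z, hz⟩ := term_eq_var hFun (ts 0)
    cases z with
    | inl e => exact e.elim
    | inr i =>
      have hts : ts = fun _ => Term.var (Sum.inr i) := by
        funext j
        rw [Subsingleton.elim j 0, hz]
      subst hts
      simp only [BoundedFormula.Realize, Term.realize, Sum.elim_inr, subStr]
      exact iff_of_eq (congrFun (h1 i) R)
  | imp f g ihf ihg =>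
    intro hd xs ys h1 h2
    simp only [qd] at hd
    simp only [BoundedFormula.realize_imp]
    exact imp_congr (ihf (by omega) xs ys h1 h2) (ihg (by omega) xs ys h1 h2)
  | all f ih =>
    intro hd xs ys h1 h2
    simp only [qd] at hd
    simp only [BoundedFormula.realize_all]
    constructor
    · intro hN b
      obtain ⟨a, hac, hmatch⟩ := extend_forward SS hP (by omega) xs ys h1 h2 b
      refine (ih (by omega) (Fin.snoc xs a) (Fin.snoc ys b) ?_ ?_).1 (hN a)
      · intro i
        refine Fin.lastCases ?_ ?_ i
        · simpa using hac
        · intro j; simpa using h1 j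
      · intro i j
        refine Fin.lastCases ?_ ?_ i <;> [skip; intro i'] <;>
          (refine Fin.lastCases ?_ ?_ j <;> [skip; intro j'] <;> simp)
        · rw [eq_comm, eq_comm (a := b)]; exact hmatch j'
        · exact hmatch i'
        · exact h2 i' j'
    · intro hM a
      obtain ⟨b, hac, hmatch⟩ := extend_backward SS xs ys h1 h2 a
      refine (ih (by omega) (Fin.snoc xs a) (Fin.snoc ys b) ?_ ?_).2 (hM b)
      · intro i
        refine Fin.lastCases ?_ ?_ i
        · simpa using hac
        · intro j; simpa using h1 j
      · intro i j
        refine Fin.lastCases ?_ ?_ i <;> [skip; intro i'] <;>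
          (refine Fin.lastCases ?_ ?_ j <;> [skip; intro j'] <;> simp)
        · rw [eq_comm, eq_comm (a := b)]; exact hmatch j'
        · exact hmatch i'
        · exact h2 i' j'

end MonadicFMP

theorem monadic_finite_model_property (L : FirstOrder.Language)
    (hFun : ∀ n, IsEmpty (L.Functions n))
    (hRel : ∀ n, n ≠ 1 → IsEmpty (L.Relations n))
    (hfin : Finite (L.Relations 1))
    (φ : L.Sentence)
    (hsat : ∃ (M : Type u) (S : L.Structure M), Nonempty M ∧ @Sentence.Realize L M S φ) :
    ∃ (M : Type u) (S : L.Structure M), Finite M ∧ Nonempty M ∧ @Sentence.Realize L M S φ := by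
  classical
  obtain ⟨M, S, ⟨m0⟩, hφ⟩ := hsat
  set n : ℕ := MonadicFMP.qd φ + 1 with hn
  have hSS : ∀ c : L.Relations 1 → Prop, ∃ s : Set M, s.Finite ∧
      ∀ F : Finset M, F.card < n → ¬ ({x | MonadicFMP.color L x = c} ⊆ (F : Set M)) →
        ∃ a, a ∈ s ∧ a ∉ F ∧ MonadicFMP.color L a = c := by
    intro c
    by_cases hc : ({x : M | MonadicFMP.color L x = c}).Finite
    · refine ⟨{x | MonadicFMP.color L x = c}, hc, fun F _ hns => ?_⟩
      obtain ⟨a, ha, haF⟩ := Set.not_subset.1 hns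
      exact ⟨a, ha, haF, ha⟩
    · obtain ⟨t, hts, htc⟩ := Set.Infinite.exists_subset_card_eq hc n
      refine ⟨↑t, t.finite_toSet, fun F hF _ => ?_⟩
      have hnsub : ¬ t ⊆ F := fun h => absurd (Finset.card_le_card h) (by omega)
      obtain ⟨a, hat, haF⟩ := Finset.not_subset.1 hnsub
      exact ⟨a, hat, haF, hts hat⟩
  choose SS hSSfin hP using hSS
  have hNfin : (MonadicFMP.NN SS).Finite := by
    haveI := hfin
    haveI : Finite (L.Relations 1 → Prop) := inferInstance
    exact Set.Finite.subset (Set.finite_iUnion fun c => hSSfin c)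
      (fun x hx => Set.mem_iUnion.2 ⟨_, hx⟩)
  have hn0 : (∅ : Finset M).card < n := by simp [hn]
  have hne0 : ¬ ({x | MonadicFMP.color L x = MonadicFMP.color L m0} ⊆ ((∅ : Finset M) : Set M)) := by
    intro h
    simpa using h (show m0 ∈ {x | MonadicFMP.color L x = MonadicFMP.color L m0} from rfl)
  obtain ⟨a0, ha0S, -, ha0c⟩ := hP (MonadicFMP.color L m0) ∅ hn0 hne0
  have ha0N : a0 ∈ MonadicFMP.NN SS := by
    show a0 ∈ SS (MonadicFMP.color L a0); rw [ha0c]; exact ha0S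
  refine ⟨MonadicFMP.NN SS, MonadicFMP.subStr hFun (MonadicFMP.NN SS),
    hNfin.to_subtype, ⟨⟨a0, ha0N⟩⟩, ?_⟩
  have hkey := MonadicFMP.key SS hFun hRel hP (φ : L.BoundedFormula Empty 0)
    (by simp [hn]) (fun i => i.elim0) (fun i => i.elim0)
    (fun i => i.elim0) (fun i => i.elim0)
  have hd1 : (default : Empty → M) = Empty.elim := funext fun e => e.elim
  have hd2 : (default : Fin 0 → M) = fun i => i.elim0 := funext fun i => i.elim0
  have hd3 : (default : Empty → (MonadicFMP.NN SS : Set M)) = Empty.elim :=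
    funext fun e => e.elim
  have hd4 : (default : Fin 0 → (MonadicFMP.NN SS : Set M)) = fun i => i.elim0 :=
    funext fun i => i.elim0
  show @BoundedFormula.Realize L _ (MonadicFMP.subStr hFun (MonadicFMP.NN SS)) Empty 0 φ
    default default
  rw [hd3, hd4]
  apply hkey.2
  have : @BoundedFormula.Realize L M S Empty 0 φ default default := hφ
  rwa [hd1, hd2] at this
end

section
/- Let k be a natural number and let L be a first-order language whose symbols consist of exactly k unary relation symbols (no function symbols, no constant symbols, no relation symbols of other arities). Let φ be an L-sentence in which the equality symbol does not occur (i.e., no atomic subformula of φ is of the form t₁ = t₂). If φ has a model, then φ has a model whose domain has cardinality at most 2^k. (The bound 2^k for monadic sentences, from Hilbert's 1922/23 lectures, discussed in the paper.) -/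
open FirstOrder Language

/-- A bounded formula is equality-free if it contains no atomic subformula built with the
equality symbol. -/
def EqualityFree {L : FirstOrder.Language} {α : Type*} :
    ∀ {n : ℕ}, L.BoundedFormula α n → Prop
  | _, .falsum => True
  | _, .equal _ _ => False
  | _, .rel _ _ => True
  | _, .imp f g => EqualityFree f ∧ EqualityFree g
  | _, .all f => EqualityFree f

section Aux

variable {k : ℕ} {M N : Type*} [SM : (monadicLang k).Structure M]
  [SN : (monadicLang k).Structure N]

lemma monadic_term_realize (h : M → N) {α : Type*} (t : (monadicLang k).Term α)
    (v : α → M) :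
    Term.realize (fun a => h (v a)) t = h (Term.realize v t) := by
  induction t with
  | var a => rfl
  | func f ts ih => exact f.elim

lemma monadic_realize_iff_s7 (h : M → N) (hsurj : Function.Surjective h)
    (hrel : ∀ (r : Fin k) (xs : Fin 1 → M),
      Structure.RelMap (L := monadicLang k) (M := M) (n := 1) r xs ↔
      Structure.RelMap (L := monadicLang k) (M := N) (n := 1) r (fun i => h (xs i)))
    {α : Type*} :
    ∀ {n : ℕ} (f : (monadicLang k).BoundedFormula α n), EqualityFree f →
      ∀ (v : α → M) (xs : Fin n → M),
        f.Realize v xs ↔ f.Realize (fun a => h (v a)) (fun i => h (xs i)) := by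
  intro n f
  induction f with
  | falsum => intro _ v xs; exact Iff.rfl
  | equal t₁ t₂ => intro hf; exact absurd hf (by simp [EqualityFree])
  | @rel n l R ts =>
    intro _ v xs
    match l, R with
    | 1, R =>
      show Structure.RelMap R (fun i => Term.realize (Sum.elim v xs) (ts i)) ↔
        Structure.RelMap R (fun i =>
          Term.realize (Sum.elim (fun a => h (v a)) (fun i => h (xs i))) (ts i))
      have hterm : ∀ i : Fin 1,
          Term.realize (Sum.elim (fun a => h (v a)) (fun i => h (xs i))) (ts i)
            = h (Term.realize (Sum.elim v xs) (ts i)) := by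
        intro i
        have := monadic_term_realize (k := k) h (ts i) (Sum.elim v xs)
        rw [← this]
        congr 1
        funext a
        cases a <;> rfl
      rw [show (fun i => Term.realize (Sum.elim (fun a => h (v a)) (fun i => h (xs i))) (ts i))
            = fun i => h (Term.realize (Sum.elim v xs) (ts i)) from funext hterm]
      exact hrel R _
  | @imp n f g ihf ihg =>
    intro hf v xs
    simp only [BoundedFormula.realize_imp]
    rw [ihf hf.1 v xs, ihg hf.2 v xs]
  | @all n f ih =>
    intro hf v xs
    simp only [BoundedFormula.realize_all]
    have hsnoc : ∀ a : M, (fun i => h ((Fin.snoc xs a : Fin (n + 1) → M) i))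
        = Fin.snoc (fun i => h (xs i)) (h a) := by
      intro a
      funext i
      refine Fin.lastCases ?_ ?_ i
      · simp
      · intro j; simp
    constructor
    · intro H b
      obtain ⟨a, rfl⟩ := hsurj b
      have := (ih hf v (Fin.snoc xs a)).mp (H a)
      rwa [hsnoc a] at this
    · intro H a
      have := H (h a)
      rw [ih hf v (Fin.snoc xs a), hsnoc a]
      exact this

end Aux

theorem monadic_equalityFree_small_model (k : ℕ) (φ : (monadicLang k).Sentence)
    (hfree : EqualityFree φ)
    (hsat : ∃ (M : Type u) (S : (monadicLang k).Structure M),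
      Nonempty M ∧ @Sentence.Realize (monadicLang k) M S φ) :
    ∃ (M : Type u) (S : (monadicLang k).Structure M),
      Nonempty M ∧ Finite M ∧ Nat.card M ≤ 2 ^ k ∧
        @Sentence.Realize (monadicLang k) M S φ := by
  classical
  obtain ⟨M, S, hne, hreal⟩ := hsat
  let c : M → (Fin k → Bool) := fun x i =>
    decide (Structure.RelMap (L := monadicLang k) (n := 1) (i : Fin k) (fun _ => x))
  let N : Type u := ULift.{u} (Set.range c)
  letI SN : (monadicLang k).Structure N :=
    { funMap := fun {l} f _ => f.elim
      RelMap := fun {l} r xs =>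
        match l, r, xs with
        | 1, r, xs => (xs 0).down.1 r = true
        | 0, r, _ => r.elim
        | (_ + 2), r, _ => r.elim }
  have hN : ∀ (r : Fin k) (xs : Fin 1 → N),
      Structure.RelMap (L := monadicLang k) (M := N) (n := 1) r xs ↔
        (xs 0).down.1 r = true := fun _ _ => Iff.rfl
  let h : M → N := fun x => ⟨⟨c x, Set.mem_range_self x⟩⟩
  have hsurj : Function.Surjective h := by
    rintro ⟨⟨f, x, rfl⟩⟩
    exact ⟨x, rfl⟩
  have hrel : ∀ (r : Fin k) (xs : Fin 1 → M),
      Structure.RelMap (L := monadicLang k) (M := M) (n := 1) r xs ↔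
      Structure.RelMap (L := monadicLang k) (M := N) (n := 1) r (fun i => h (xs i)) := by
    intro r xs
    rw [hN]
    show _ ↔ c (xs 0) r = true
    simp only [c, decide_eq_true_eq]
    have hxs : (fun _ : Fin 1 => xs 0) = xs := by
      funext i
      rw [Subsingleton.elim i 0]
    rw [hxs]
  refine ⟨N, SN, ⟨h (Classical.choice hne)⟩, ?_, ?_, ?_⟩
  · exact Finite.of_equiv _ Equiv.ulift.symm
  · calc Nat.card N = Nat.card (Set.range c) := Nat.card_congr Equiv.ulift
      _ ≤ Nat.card (Fin k → Bool) := by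
          exact Nat.card_le_card_of_injective _ Subtype.val_injective
      _ = 2 ^ k := by simp [Nat.card_fun]
  · have := (monadic_realize_iff_s7 (k := k) h hsurj hrel φ hfree default default).mp hreal
    unfold Sentence.Realize Formula.Realize
    convert this using 2
end

section
/- Let L be a first-order language with no function symbols and no constant symbols (a relational language), let m and n be natural numbers, and let ψ be a quantifier-free L-formula with m + n free variables. If the prenex sentence ∃x₁ … ∃xₘ ∀y₁ … ∀yₙ ψ(x₁,…,xₘ,y₁,…,yₙ) has a model, then it has a model whose domain has cardinality at most max m 1. (Decidability via the finite model property for the Bernays–Schönfinkel class of ∃*∀* prenex sentences.) -/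
open FirstOrder Language

/-- Universally quantify the last `n` free variables of a bounded formula. -/
def univClosureLast {L : FirstOrder.Language} {m : ℕ} :
    ∀ {n : ℕ}, L.BoundedFormula Empty (m + n) → L.BoundedFormula Empty m
  | 0, ψ => ψ
  | _ + 1, ψ => univClosureLast ψ.all

/-- The Bernays–Schönfinkel prenex sentence `∃ x₁ … xₘ ∀ y₁ … yₙ, ψ`. -/
def bernaysSchoenfinkelSentence {L : FirstOrder.Language} {m n : ℕ}
    (ψ : L.BoundedFormula Empty (m + n)) : L.Sentence :=
  (univClosureLast ψ).exs

lemma fin_comp_append {α β : Sort*} {m n : ℕ} (f : α → β) (a : Fin m → α) (b : Fin n → α) :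
    f ∘ Fin.append a b = Fin.append (f ∘ a) (f ∘ b) := by
  funext i
  refine Fin.addCases (fun i => ?_) (fun i => ?_) i <;>
    simp [Fin.append_left, Fin.append_right]

lemma realize_univClosureLast {L : FirstOrder.Language} {M : Type*} [L.Structure M]
    {m : ℕ} : ∀ {n : ℕ} (ψ : L.BoundedFormula Empty (m + n)) (v : Empty → M)
    (xs : Fin m → M),
    (univClosureLast ψ).Realize v xs ↔ ∀ ys : Fin n → M, ψ.Realize v (Fin.append xs ys)
  | 0, ψ, v, xs => by
    simp only [univClosureLast]
    constructor
    · intro h ys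
      have e : (Fin.append xs ys : Fin (m + 0) → M) = xs := funext fun i => Fin.append_left xs ys i
      rw [e]
      exact h
    · intro h
      have := h Fin.elim0
      have e : (Fin.append xs Fin.elim0 : Fin (m + 0) → M) = xs :=
        funext fun i => Fin.append_left xs Fin.elim0 i
      rw [e] at this
      exact this
  | n + 1, ψ, v, xs => by
    rw [univClosureLast, realize_univClosureLast ψ.all v xs]
    constructor
    · intro h ys
      have := (BoundedFormula.realize_all.1 (h (Fin.init ys))) (ys (Fin.last n))
      rwa [← Fin.append_snoc, Fin.snoc_init_self] at this
    · intro h ys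
      rw [BoundedFormula.realize_all]
      intro a
      have := h (Fin.snoc ys a)
      rwa [Fin.append_snoc] at this

theorem bernays_schoenfinkel_finite_model_property (L : FirstOrder.Language)
    (hFun : ∀ i, IsEmpty (L.Functions i)) (m n : ℕ)
    (ψ : L.BoundedFormula Empty (m + n)) (hqf : ψ.IsQF)
    (hsat : ∃ (M : Type u) (S : L.Structure M),
      Nonempty M ∧ @Sentence.Realize L M S (bernaysSchoenfinkelSentence ψ)) :
    ∃ (M : Type u) (S : L.Structure M),
      Nonempty M ∧ Finite M ∧ Nat.card M ≤ max m 1 ∧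
        @Sentence.Realize L M S (bernaysSchoenfinkelSentence ψ) := by
  obtain ⟨M, S, hne, hreal⟩ := hsat
  haveI := hne
  rw [bernaysSchoenfinkelSentence, Sentence.Realize, BoundedFormula.realize_exs] at hreal
  obtain ⟨a, ha⟩ := hreal
  rw [realize_univClosureLast] at ha
  set x₀ : M := if h : m = 0 then Classical.arbitrary M else a ⟨0, Nat.pos_of_ne_zero h⟩
    with hx₀
  set s : Set M := insert x₀ (Set.range a) with hs
  let S' : L.Substructure M := ⟨s, fun {k} f _ _ => (hFun k).elim f⟩
  haveI : Finite ↥S' := Set.Finite.to_subtype ((Set.finite_range a).insert x₀)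
  refine ⟨↥S', inferInstance, ⟨⟨x₀, Set.mem_insert _ _⟩⟩, inferInstance, ?_, ?_⟩
  · rcases Nat.eq_zero_or_pos m with hm | hm
    · subst hm
      have : s = {x₀} := by
        rw [hs]
        simp [Set.range_eq_empty]
      have : Nat.card ↥S' = 1 := by
        show Nat.card ↥s = 1
        rw [this]; simp
      simp [this]
    · have hx : x₀ ∈ Set.range a := by
        rw [hx₀, dif_neg (Nat.pos_iff_ne_zero.1 hm)]
        exact Set.mem_range_self _
      have hseq : s = Set.range a := by rw [hs, Set.insert_eq_self.2 hx]
      calc Nat.card ↥S' = Nat.card ↥(Set.range a) :=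
            Nat.card_congr (Equiv.setCongr hseq)
        _ ≤ Nat.card (Fin m) :=
            Nat.card_le_card_of_surjective (Set.rangeFactorization a)
              Set.rangeFactorization_surjective
        _ ≤ max m 1 := by simp
  · rw [bernaysSchoenfinkelSentence, Sentence.Realize, BoundedFormula.realize_exs]
    refine ⟨fun i => ⟨a i, Set.mem_insert_of_mem _ (Set.mem_range_self i)⟩, ?_⟩
    rw [realize_univClosureLast]
    intro ys
    refine (hqf.realize_embedding S'.subtype).1 ?_
    rw [fin_comp_append]
    have : (⇑S'.subtype ∘ fun i => (⟨a i, Set.mem_insert_of_mem _ (Set.mem_range_self i)⟩ : ↥S')) = a := rfl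
    rw [this]
    have hv : ⇑S'.subtype ∘ (default : Empty → ↥S') = default := funext fun e => e.elim
    rw [hv]
    exact ha _
end
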